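/- Let A ∈ ℝ^{n×n}, B ∈ ℝ^{n×m}, let U_0,…,U_{N−1} ⊆ ℝᵐ and X_1,…,X_N ⊆ ℝⁿ be convex sets, let l_0,…,l_{N−1} : ℝⁿ × ℝᵐ → ℝ be convex and nonnegative, and let V_t : ℝⁿ → ℝ be convex and nonnegative. Let w_1,…,w_S > 0 with Σ_s w_s = 1 and let disturbance sequences d^{(1)},…,d^{(S)} satisfy Σ_{s=1}^S w_s d^{(s)} = 0 (componentwise, for every stage k). If the feasible set F(x̂, d^{(s)}) is nonempty for every s, then the nominal feasible set F(x̂, 0) is nonempty and V_N(x̂, 0) ≤ Σ_{s=1}^S w_s V_N(x̂, d^{(s)}). -/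
import Mathlib

open Matrix Finset

/-- The feasible set `F(xhat, d)` of the convex finite-horizon problem: trajectories with
`x₀ = xhat`, dynamics `x_{k+1} = A x_k + B u_k + d_k`, input constraints `u_k ∈ U_k` and state
constraints `x_{k+1} ∈ X_{k+1}`. -/
def mpcFeas {n m N : ℕ}
    (A : Matrix (Fin n) (Fin n) ℝ) (B : Matrix (Fin n) (Fin m) ℝ)
    (U : Fin N → Set (Fin m → ℝ)) (X : Fin N → Set (Fin n → ℝ))
    (xhat : Fin n → ℝ) (d : Fin N → Fin n → ℝ) :
    Set ((Fin (N + 1) → Fin n → ℝ) × (Fin N → Fin m → ℝ)) :=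
  {p | p.1 0 = xhat ∧
    (∀ k : Fin N, p.1 k.succ = A.mulVec (p.1 k.castSucc) + B.mulVec (p.2 k) + d k) ∧
    (∀ k : Fin N, p.2 k ∈ U k) ∧
    (∀ k : Fin N, p.1 k.succ ∈ X k)}

/-- Trajectory cost: sum of stage costs plus terminal cost. -/
def mpcCost {n m N : ℕ}
    (l : Fin N → (Fin n → ℝ) → (Fin m → ℝ) → ℝ) (Vt : (Fin n → ℝ) → ℝ)
    (p : (Fin (N + 1) → Fin n → ℝ) × (Fin N → Fin m → ℝ)) : ℝ :=
  (∑ k : Fin N, l k (p.1 k.castSucc) (p.2 k)) + Vt (p.1 (Fin.last N))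

/-- Value function `V_N(xhat, d)`. -/
noncomputable def mpcVal {n m N : ℕ}
    (A : Matrix (Fin n) (Fin n) ℝ) (B : Matrix (Fin n) (Fin m) ℝ)
    (U : Fin N → Set (Fin m → ℝ)) (X : Fin N → Set (Fin n → ℝ))
    (l : Fin N → (Fin n → ℝ) → (Fin m → ℝ) → ℝ) (Vt : (Fin n → ℝ) → ℝ)
    (xhat : Fin n → ℝ) (d : Fin N → Fin n → ℝ) : ℝ :=
  sInf (mpcCost l Vt '' mpcFeas A B U X xhat d)

section Aux

variable {n m N S : ℕ}

/-- The weighted average of feasible trajectories is feasible for the nominal problem. -/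
lemma avg_feas
    (A : Matrix (Fin n) (Fin n) ℝ) (B : Matrix (Fin n) (Fin m) ℝ)
    (U : Fin N → Set (Fin m → ℝ)) (X : Fin N → Set (Fin n → ℝ))
    (hU : ∀ k, Convex ℝ (U k)) (hX : ∀ k, Convex ℝ (X k))
    (w : Fin S → ℝ) (hw : ∀ s, 0 < w s) (hw1 : ∑ s, w s = 1)
    (d : Fin S → Fin N → Fin n → ℝ)
    (hd : ∀ k : Fin N, ∑ s, w s • d s k = 0)
    (xhat : Fin n → ℝ)
    (p : Fin S → (Fin (N + 1) → Fin n → ℝ) × (Fin N → Fin m → ℝ))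
    (hp : ∀ s, p s ∈ mpcFeas A B U X xhat (d s)) :
    (fun k => ∑ s, w s • (p s).1 k, fun k => ∑ s, w s • (p s).2 k) ∈
      mpcFeas A B U X xhat (0 : Fin N → Fin n → ℝ) := by
  have hA : ∀ (v : Fin S → Fin n → ℝ),
      ∑ s, w s • A.mulVec (v s) = A.mulVec (∑ s, w s • v s) := by
    intro v
    simp only [← Matrix.mulVecLin_apply, ← _root_.map_smul, ← map_sum]
  have hB : ∀ (v : Fin S → Fin m → ℝ),
      ∑ s, w s • B.mulVec (v s) = B.mulVec (∑ s, w s • v s) := by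
    intro v
    simp only [← Matrix.mulVecLin_apply, ← _root_.map_smul, ← map_sum]
  refine ⟨?_, ?_, ?_, ?_⟩
  · show ∑ s, w s • (p s).1 0 = xhat
    have : ∀ s : Fin S, w s • (p s).1 0 = w s • xhat := fun s => by rw [(hp s).1]
    rw [Finset.sum_congr rfl (fun s _ => this s), ← Finset.sum_smul, hw1, one_smul]
  · intro k
    show ∑ s, w s • (p s).1 k.succ = _
    have : ∀ s : Fin S, w s • (p s).1 k.succ =
        w s • A.mulVec ((p s).1 k.castSucc) + w s • B.mulVec ((p s).2 k) + w s • d s k := by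
      intro s
      rw [(hp s).2.1 k, smul_add, smul_add]
    rw [Finset.sum_congr rfl (fun s _ => this s), Finset.sum_add_distrib,
      Finset.sum_add_distrib, hA, hB, hd k]
    simp
  · intro k
    exact (hU k).sum_mem (fun s _ => (hw s).le) hw1 (fun s _ => (hp s).2.2.1 k)
  · intro k
    exact (hX k).sum_mem (fun s _ => (hw s).le) hw1 (fun s _ => (hp s).2.2.2 k)

/-- Jensen: the average trajectory's cost is at most the weighted average cost. -/
lemma avg_cost_le
    (l : Fin N → (Fin n → ℝ) → (Fin m → ℝ) → ℝ)
    (hl : ∀ k, ConvexOn ℝ Set.univ (fun p : (Fin n → ℝ) × (Fin m → ℝ) => l k p.1 p.2))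
    (Vt : (Fin n → ℝ) → ℝ)
    (hVt : ConvexOn ℝ Set.univ Vt)
    (w : Fin S → ℝ) (hw : ∀ s, 0 < w s) (hw1 : ∑ s, w s = 1)
    (p : Fin S → (Fin (N + 1) → Fin n → ℝ) × (Fin N → Fin m → ℝ)) :
    mpcCost l Vt (fun k => ∑ s, w s • (p s).1 k, fun k => ∑ s, w s • (p s).2 k) ≤
      ∑ s, w s * mpcCost l Vt (p s) := by
  have h₀ : ∀ s ∈ (Finset.univ : Finset (Fin S)), 0 ≤ w s := fun s _ => (hw s).le
  have hstage : ∀ k : Fin N,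
      l k (∑ s, w s • (p s).1 k.castSucc) (∑ s, w s • (p s).2 k) ≤
        ∑ s, w s * l k ((p s).1 k.castSucc) ((p s).2 k) := by
    intro k
    have hkey : (∑ s, w s • (p s).1 k.castSucc, ∑ s, w s • (p s).2 k) =
        ∑ s, w s • (((p s).1 k.castSucc, (p s).2 k) : (Fin n → ℝ) × (Fin m → ℝ)) := by
      ext <;> simp [Prod.fst_sum, Prod.snd_sum]
    have := (hl k).map_sum_le h₀ hw1 (fun s _ => Set.mem_univ _)
      (p := fun s => (((p s).1 k.castSucc, (p s).2 k) : (Fin n → ℝ) × (Fin m → ℝ)))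
    calc l k (∑ s, w s • (p s).1 k.castSucc) (∑ s, w s • (p s).2 k)
        = (fun q : (Fin n → ℝ) × (Fin m → ℝ) => l k q.1 q.2)
            (∑ s, w s • (((p s).1 k.castSucc, (p s).2 k) : (Fin n → ℝ) × (Fin m → ℝ))) := by
          rw [← hkey]
      _ ≤ ∑ s, w s * l k ((p s).1 k.castSucc) ((p s).2 k) := this
  have hterm : Vt (∑ s, w s • (p s).1 (Fin.last N)) ≤ ∑ s, w s * Vt ((p s).1 (Fin.last N)) :=
    hVt.map_sum_le h₀ hw1 (fun s _ => Set.mem_univ _)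
  unfold mpcCost
  simp only
  calc (∑ k : Fin N, l k (∑ s, w s • (p s).1 k.castSucc) (∑ s, w s • (p s).2 k)) +
        Vt (∑ s, w s • (p s).1 (Fin.last N))
      ≤ (∑ k : Fin N, ∑ s, w s * l k ((p s).1 k.castSucc) ((p s).2 k)) +
        ∑ s, w s * Vt ((p s).1 (Fin.last N)) :=
        add_le_add (Finset.sum_le_sum fun k _ => hstage k) hterm
    _ = ∑ s, w s * mpcCost l Vt (p s) := by
        rw [Finset.sum_comm, ← Finset.sum_add_distrib]
        refine Finset.sum_congr rfl fun s _ => ?_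
        rw [mpcCost, mul_add, Finset.mul_sum]

end Aux

/-- Jensen step of the paper's Theorem 1: if every scenario `F(xhat, d⁽ˢ⁾)` is
feasible and the disturbances have zero weighted mean, then the nominal problem is feasible and
the nominal value under-estimates the weighted scenario values. -/
theorem nominal_value_underestimates_weighted_scenario_values
    {n m N S : ℕ}
    (A : Matrix (Fin n) (Fin n) ℝ) (B : Matrix (Fin n) (Fin m) ℝ)
    (U : Fin N → Set (Fin m → ℝ)) (X : Fin N → Set (Fin n → ℝ))
    (hU : ∀ k, Convex ℝ (U k)) (hX : ∀ k, Convex ℝ (X k))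
    (l : Fin N → (Fin n → ℝ) → (Fin m → ℝ) → ℝ)
    (hl : ∀ k, ConvexOn ℝ Set.univ (fun p : (Fin n → ℝ) × (Fin m → ℝ) => l k p.1 p.2))
    (hl0 : ∀ k x u, 0 ≤ l k x u)
    (Vt : (Fin n → ℝ) → ℝ)
    (hVt : ConvexOn ℝ Set.univ Vt) (hVt0 : ∀ x, 0 ≤ Vt x)
    (w : Fin S → ℝ) (hw : ∀ s, 0 < w s) (hw1 : ∑ s, w s = 1)
    (d : Fin S → Fin N → Fin n → ℝ)
    (hd : ∀ k : Fin N, ∑ s, w s • d s k = 0)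
    (xhat : Fin n → ℝ)
    (hfeas : ∀ s : Fin S, (mpcFeas A B U X xhat (d s)).Nonempty) :
    (mpcFeas A B U X xhat 0).Nonempty ∧
      mpcVal A B U X l Vt xhat 0 ≤ ∑ s, w s * mpcVal A B U X l Vt xhat (d s) := by
  have hcost0 : ∀ q, 0 ≤ mpcCost l Vt q := fun q =>
    add_nonneg (Finset.sum_nonneg fun k _ => hl0 k _ _) (hVt0 _)
  have hbdd : BddBelow (mpcCost l Vt '' mpcFeas A B U X xhat (0 : Fin N → Fin n → ℝ)) :=
    ⟨0, fun y ⟨q, _, hq⟩ => hq ▸ hcost0 q⟩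
  choose p0 hp0 using hfeas
  have hne : (mpcFeas A B U X xhat 0).Nonempty :=
    ⟨_, avg_feas A B U X hU hX w hw hw1 d hd xhat p0 hp0⟩
  refine ⟨hne, ?_⟩
  refine le_of_forall_pos_le_add fun ε hε => ?_
  -- pick near-optimal feasible points for each scenario
  have hsel : ∀ s : Fin S, ∃ p ∈ mpcFeas A B U X xhat (d s),
      mpcCost l Vt p < mpcVal A B U X l Vt xhat (d s) + ε := by
    intro s
    obtain ⟨a, ⟨q, hq, rfl⟩, ha⟩ :=
      Real.lt_sInf_add_pos (Set.Nonempty.image (mpcCost l Vt) ⟨p0 s, hp0 s⟩) hε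
    exact ⟨q, hq, ha⟩
  choose p hp hplt using hsel
  have hfeas0 := avg_feas A B U X hU hX w hw hw1 d hd xhat p hp
  have h1 : mpcVal A B U X l Vt xhat 0 ≤
      mpcCost l Vt (fun k => ∑ s, w s • (p s).1 k, fun k => ∑ s, w s • (p s).2 k) :=
    csInf_le hbdd ⟨_, hfeas0, rfl⟩
  have h2 := avg_cost_le l hl Vt hVt w hw hw1 p
  have h3 : ∑ s, w s * mpcCost l Vt (p s) ≤
      ∑ s, w s * (mpcVal A B U X l Vt xhat (d s) + ε) :=
    Finset.sum_le_sum fun s _ => mul_le_mul_of_nonneg_left (hplt s).le (hw s).le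
  have h4 : ∑ s, w s * (mpcVal A B U X l Vt xhat (d s) + ε) =
      (∑ s, w s * mpcVal A B U X l Vt xhat (d s)) + ε := by
    simp only [mul_add]
    rw [Finset.sum_add_distrib, ← Finset.sum_mul, hw1, one_mul]
  linarith
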